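/- Let W be an algebraic Weyl tensor (an algebraic curvature tensor with vanishing Ricci trace, ∑_i W_{ikil} = 0 for all k,l) on an n-dimensional Euclidean vector space, n ≥ 3. Let {S^α} be an orthonormal basis of the space of trace-free symmetric 2-tensors, and let S^α act on W by (S^α W)_{ijkl} = ∑_m (S^α_{im}W_{mjkl} + S^α_{jm}W_{imkl} + S^α_{km}W_{ijml} + S^α_{lm}W_{ijkm}). Then ∑_α |S^α W|² = 2(n² + n - 8)|W|²/n. -/

import Mathlib

open Finset

/-- The derivation action of a symmetric 2-tensor `S` on a 4-tensor `W`. -/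
def tensorAct (n : ℕ) (S : Fin n → Fin n → ℝ)
    (W : Fin n → Fin n → Fin n → Fin n → ℝ) (i j k l : Fin n) : ℝ :=
  ∑ m, (S i m * W m j k l + S j m * W i m k l + S k m * W i j m l + S l m * W i j k m)

/-- Auxiliary: coefficient tensor of the action, as a 2-tensor in `(a, b)`. -/
def Gfun (n : ℕ) (W : Fin n → Fin n → Fin n → Fin n → ℝ) (i j k l a b : Fin n) : ℝ :=
  (if a = i then (1:ℝ) else 0) * W b j k l + (if a = j then 1 else 0) * W i b k l
  + (if a = k then 1 else 0) * W i j b l + (if a = l then 1 else 0) * W i j k b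

section Aux

variable {n : ℕ}

lemma sum_ite_zero' {β : Type*} (s : Finset β) (c : Prop) [Decidable c] (f : β → ℝ) :
    ∑ x ∈ s, (if c then f x else 0) = if c then ∑ x ∈ s, f x else 0 := by
  split <;> simp

lemma sum4 (f : Fin n → Fin n → Fin n → Fin n → ℝ) :
    ∑ a, ∑ b, ∑ c, ∑ d, f a b c d
      = ∑ p : Fin n × Fin n × Fin n × Fin n, f p.1 p.2.1 p.2.2.1 p.2.2.2 := by
  rw [Fintype.sum_prod_type]
  refine Finset.sum_congr rfl fun a _ => ?_
  rw [Fintype.sum_prod_type]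
  refine Finset.sum_congr rfl fun b _ => ?_
  rw [Fintype.sum_prod_type]

lemma sum4_perm (f g : Fin n → Fin n → Fin n → Fin n → ℝ)
    (e : (Fin n × Fin n × Fin n × Fin n) ≃ (Fin n × Fin n × Fin n × Fin n))
    (h : ∀ a b c d, f a b c d
      = g (e (a,b,c,d)).1 (e (a,b,c,d)).2.1 (e (a,b,c,d)).2.2.1 (e (a,b,c,d)).2.2.2) :
    (∑ a, ∑ b, ∑ c, ∑ d, f a b c d) = ∑ a, ∑ b, ∑ c, ∑ d, g a b c d := by
  rw [sum4, sum4]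
  exact Fintype.sum_equiv e _ _ (fun ⟨a,b,c,d⟩ => h a b c d)

lemma contract2 (x y : Fin n) (Z : Fin n → Fin n → ℝ) :
    ∑ a, ∑ b, (if b = y then (1:ℝ) else 0) * ((if a = x then 1 else 0) * Z a b) = Z x y := by
  have h : ∀ a : Fin n, (∑ b, (if b = y then (1:ℝ) else 0) * ((if a = x then 1 else 0) * Z a b))
      = (if a = x then (1:ℝ) else 0) * Z a y := by
    intro a; simp [ite_mul, Finset.sum_ite_eq']
  simp_rw [h]
  simp [ite_mul, Finset.sum_ite_eq']

variable (W : Fin n → Fin n → Fin n → Fin n → ℝ)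

lemma hGdiag (i j k l : Fin n) : ∑ a, Gfun n W i j k l a a = 4 * W i j k l := by
  unfold Gfun
  simp only [Finset.sum_add_distrib, ite_mul, one_mul, zero_mul,
    Finset.sum_ite_eq', Finset.mem_univ, if_true]
  ring

lemma hGsq (i j k l b : Fin n) : ∑ a, (Gfun n W i j k l a b)^2
    = (W b j k l)^2 + (W i b k l)^2 + (W i j b l)^2 + (W i j k b)^2
    + (if j = i then 2 * (W b j k l * W i b k l) else 0)
    + (if k = i then 2 * (W b j k l * W i j b l) else 0)
    + (if l = i then 2 * (W b j k l * W i j k b) else 0)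
    + (if k = j then 2 * (W i b k l * W i j b l) else 0)
    + (if l = j then 2 * (W i b k l * W i j k b) else 0)
    + (if l = k then 2 * (W i j b l * W i j k b) else 0) := by
  have hsq : ∀ a, (Gfun n W i j k l a b)^2
      = (if a = i then (1:ℝ) else 0) * (W b j k l)^2
      + (if a = j then (1:ℝ) else 0) * (W i b k l)^2
      + (if a = k then (1:ℝ) else 0) * (W i j b l)^2
      + (if a = l then (1:ℝ) else 0) * (W i j k b)^2
      + (if a = i then (1:ℝ) else 0) * ((if a = j then (1:ℝ) else 0) * (2 * (W b j k l * W i b k l)))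
      + (if a = i then (1:ℝ) else 0) * ((if a = k then (1:ℝ) else 0) * (2 * (W b j k l * W i j b l)))
      + (if a = i then (1:ℝ) else 0) * ((if a = l then (1:ℝ) else 0) * (2 * (W b j k l * W i j k b)))
      + (if a = j then (1:ℝ) else 0) * ((if a = k then (1:ℝ) else 0) * (2 * (W i b k l * W i j b l)))
      + (if a = j then (1:ℝ) else 0) * ((if a = l then (1:ℝ) else 0) * (2 * (W i b k l * W i j k b)))
      + (if a = k then (1:ℝ) else 0) * ((if a = l then (1:ℝ) else 0) * (2 * (W i j b l * W i j k b))) := by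
    intro a
    unfold Gfun
    split_ifs <;> ring
  simp_rw [hsq]
  simp only [Finset.sum_add_distrib, ite_mul, one_mul, zero_mul, mul_ite, mul_zero,
    Finset.sum_ite_eq', Finset.mem_univ, if_true]

lemma hGcross (i j k l : Fin n) : ∑ a, ∑ b, Gfun n W i j k l a b * Gfun n W i j k l b a
    = 4 * (W i j k l)^2
    + W j j k l * W i i k l + W i i k l * W j j k l
    + W k j k l * W i j i l + W i j i l * W k j k l
    + W l j k l * W i j k i + W i j k i * W l j k l
    + W i k k l * W i j j l + W i j j l * W i k k l
    + W i l k l * W i j k j + W i j k j * W i l k l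
    + W i j l l * W i j k k + W i j k k * W i j l l := by
  have hpq : ∀ a b, Gfun n W i j k l a b * Gfun n W i j k l b a
      = (if b = i then (1:ℝ) else 0) * ((if a = i then (1:ℝ) else 0) * (W b j k l * W a j k l))
      + (if b = j then (1:ℝ) else 0) * ((if a = i then (1:ℝ) else 0) * (W b j k l * W i a k l))
      + (if b = k then (1:ℝ) else 0) * ((if a = i then (1:ℝ) else 0) * (W b j k l * W i j a l))
      + (if b = l then (1:ℝ) else 0) * ((if a = i then (1:ℝ) else 0) * (W b j k l * W i j k a))
      + (if b = i then (1:ℝ) else 0) * ((if a = j then (1:ℝ) else 0) * (W i b k l * W a j k l))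
      + (if b = j then (1:ℝ) else 0) * ((if a = j then (1:ℝ) else 0) * (W i b k l * W i a k l))
      + (if b = k then (1:ℝ) else 0) * ((if a = j then (1:ℝ) else 0) * (W i b k l * W i j a l))
      + (if b = l then (1:ℝ) else 0) * ((if a = j then (1:ℝ) else 0) * (W i b k l * W i j k a))
      + (if b = i then (1:ℝ) else 0) * ((if a = k then (1:ℝ) else 0) * (W i j b l * W a j k l))
      + (if b = j then (1:ℝ) else 0) * ((if a = k then (1:ℝ) else 0) * (W i j b l * W i a k l))
      + (if b = k then (1:ℝ) else 0) * ((if a = k then (1:ℝ) else 0) * (W i j b l * W i j a l))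
      + (if b = l then (1:ℝ) else 0) * ((if a = k then (1:ℝ) else 0) * (W i j b l * W i j k a))
      + (if b = i then (1:ℝ) else 0) * ((if a = l then (1:ℝ) else 0) * (W i j k b * W a j k l))
      + (if b = j then (1:ℝ) else 0) * ((if a = l then (1:ℝ) else 0) * (W i j k b * W i a k l))
      + (if b = k then (1:ℝ) else 0) * ((if a = l then (1:ℝ) else 0) * (W i j k b * W i j a l))
      + (if b = l then (1:ℝ) else 0) * ((if a = l then (1:ℝ) else 0) * (W i j k b * W i j k a)) := by
    intro a b
    unfold Gfun
    ring
  simp_rw [hpq]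
  simp only [Finset.sum_add_distrib]
  rw [contract2 i i (fun a b => W b j k l * W a j k l),
    contract2 i j (fun a b => W b j k l * W i a k l),
    contract2 i k (fun a b => W b j k l * W i j a l),
    contract2 i l (fun a b => W b j k l * W i j k a),
    contract2 j i (fun a b => W i b k l * W a j k l),
    contract2 j j (fun a b => W i b k l * W i a k l),
    contract2 j k (fun a b => W i b k l * W i j a l),
    contract2 j l (fun a b => W i b k l * W i j k a),
    contract2 k i (fun a b => W i j b l * W a j k l),
    contract2 k j (fun a b => W i j b l * W i a k l),
    contract2 k k (fun a b => W i j b l * W i j a l),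
    contract2 k l (fun a b => W i j b l * W i j k a),
    contract2 l i (fun a b => W i j k b * W a j k l),
    contract2 l j (fun a b => W i j k b * W i a k l),
    contract2 l k (fun a b => W i j k b * W i j a l),
    contract2 l l (fun a b => W i j k b * W i j k a)]
  ring

variable (hWa : ∀ i j k l, W i j k l = - W j i k l)
  (hWb : ∀ i j k l, W i j k l = - W i j l k)
  (hWc : ∀ i j k l, W i j k l = W k l i j)
  (hWbianchi : ∀ i j k l, W i j k l + W j k i l + W k i j l = 0)
  (hWtrace : ∀ k l, ∑ i, W i k i l = 0)

include hWa hWbianchi in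
lemma idB :
    (∑ a, ∑ b, ∑ c, ∑ d, W a b c d * W a c b d)
      = (∑ a, ∑ b, ∑ c, ∑ d, (W a b c d)^2) / 2 := by
  have hCB : (∑ a, ∑ b, ∑ c, ∑ d, W a b c d * W c b a d)
      = ∑ a, ∑ b, ∑ c, ∑ d, W a b c d * W a c b d := by
    refine sum4_perm _ _ ⟨fun p => (p.2.1, p.1, p.2.2.1, p.2.2.2),
      fun p => (p.2.1, p.1, p.2.2.1, p.2.2.2), fun ⟨a,b,c,d⟩ => rfl, fun ⟨a,b,c,d⟩ => rfl⟩ ?_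
    intro a b c d
    show W a b c d * W c b a d = W b a c d * W b c a d
    rw [hWa a b c d, hWa c b a d]; ring
  have hsplit : (∑ a, ∑ b, ∑ c, ∑ d, W a b c d * W a c b d)
      = (∑ a, ∑ b, ∑ c, ∑ d, ((W a b c d)^2 - W a b c d * W c b a d)) := by
    refine Finset.sum_congr rfl fun a _ => Finset.sum_congr rfl fun b _ =>
      Finset.sum_congr rfl fun c _ => Finset.sum_congr rfl fun d _ => ?_
    have h1 := hWbianchi a c b d
    have h2 := hWa b a c d
    linear_combination W a b c d * h1 - W a b c d * h2
  have h3 : (∑ a, ∑ b, ∑ c, ∑ d, W a b c d * W a c b d)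
      = (∑ a, ∑ b, ∑ c, ∑ d, (W a b c d)^2)
        - ∑ a, ∑ b, ∑ c, ∑ d, W a b c d * W c b a d := by
    rw [hsplit]; simp only [Finset.sum_sub_distrib]
  linarith [hCB, h3]

include hWa hWbianchi in
lemma idC :
    (∑ a, ∑ b, ∑ c, ∑ d, W a b c d * W c b a d)
      = (∑ a, ∑ b, ∑ c, ∑ d, (W a b c d)^2) / 2 := by
  have hCB : (∑ a, ∑ b, ∑ c, ∑ d, W a b c d * W c b a d)
      = ∑ a, ∑ b, ∑ c, ∑ d, W a b c d * W a c b d := by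
    refine sum4_perm _ _ ⟨fun p => (p.2.1, p.1, p.2.2.1, p.2.2.2),
      fun p => (p.2.1, p.1, p.2.2.1, p.2.2.2), fun ⟨a,b,c,d⟩ => rfl, fun ⟨a,b,c,d⟩ => rfl⟩ ?_
    intro a b c d
    show W a b c d * W c b a d = W b a c d * W b c a d
    rw [hWa a b c d, hWa c b a d]; ring
  rw [hCB]
  exact idB W hWa hWbianchi

include hWa hWb hWc hWbianchi in
set_option maxHeartbeats 2000000 in
lemma bigT1 :
    (∑ i, ∑ j, ∑ k, ∑ l, ∑ a, ∑ b, (Gfun n W i j k l a b)^2)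
      = 4 * n * (∑ a, ∑ b, ∑ c, ∑ d, (W a b c d)^2) := by
  have h1 : ∀ i j k l : Fin n, (∑ a, ∑ b, (Gfun n W i j k l a b)^2)
      = ∑ b, (∑ a, (Gfun n W i j k l a b)^2) := fun i j k l => Finset.sum_comm
  simp_rw [h1, hGsq W]
  simp only [Finset.sum_add_distrib, sum_ite_zero', Finset.sum_ite_eq',
    Finset.mem_univ, if_true]
  have hcard : ∀ (F : ℝ), (∑ _x : Fin n, F) = (n:ℝ) * F := by
    intro F; rw [Finset.sum_const, Finset.card_univ, Fintype.card_fin, nsmul_eq_mul]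
  have hA1 : (∑ _x : Fin n, ∑ x, ∑ x1, ∑ x2, ∑ x3, (W x3 x x1 x2)^2) = (n:ℝ) * ∑ a, ∑ b, ∑ c, ∑ d, (W a b c d)^2 := by
    rw [hcard]
    congr 1
    refine sum4_perm _ _ ⟨fun p => (p.2.2.2, p.1, p.2.1, p.2.2.1),
      fun p => (p.2.1, p.2.2.1, p.2.2.2, p.1),
      fun ⟨a,b,c,d⟩ => rfl, fun ⟨a,b,c,d⟩ => rfl⟩ (fun a b c d => rfl)
  have hA2 : (∑ x : Fin n, ∑ _x1 : Fin n, ∑ x2, ∑ x3, ∑ x4, (W x x4 x2 x3)^2) = (n:ℝ) * ∑ a, ∑ b, ∑ c, ∑ d, (W a b c d)^2 := by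
    rw [Finset.sum_congr rfl (fun x _ => hcard (∑ x2, ∑ x3, ∑ x4, (W x x4 x2 x3)^2)),
      ← Finset.mul_sum]
    congr 1
    refine sum4_perm _ _ ⟨fun p => (p.1, p.2.2.2, p.2.1, p.2.2.1),
      fun p => (p.1, p.2.2.1, p.2.2.2, p.2.1),
      fun ⟨a,b,c,d⟩ => rfl, fun ⟨a,b,c,d⟩ => rfl⟩ (fun a b c d => rfl)
  have hA3 : (∑ x : Fin n, ∑ x1 : Fin n, ∑ _x2 : Fin n, ∑ x3, ∑ x4, (W x x1 x4 x3)^2)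
      = (n:ℝ) * ∑ a, ∑ b, ∑ c, ∑ d, (W a b c d)^2 := by
    rw [Finset.sum_congr rfl (fun x _ => Finset.sum_congr rfl (fun x1 _ =>
      hcard (∑ x3, ∑ x4, (W x x1 x4 x3)^2)))]
    simp only [← Finset.mul_sum]
    congr 1
    refine sum4_perm _ _ ⟨fun p => (p.1, p.2.1, p.2.2.2, p.2.2.1),
      fun p => (p.1, p.2.1, p.2.2.2, p.2.2.1),
      fun ⟨a,b,c,d⟩ => rfl, fun ⟨a,b,c,d⟩ => rfl⟩ (fun a b c d => rfl)
  have hA4 : (∑ x : Fin n, ∑ x1 : Fin n, ∑ x2 : Fin n, ∑ _x3 : Fin n, ∑ x4, (W x x1 x2 x4)^2)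
      = (n:ℝ) * ∑ a, ∑ b, ∑ c, ∑ d, (W a b c d)^2 := by
    rw [Finset.sum_congr rfl (fun x _ => Finset.sum_congr rfl (fun x1 _ =>
      Finset.sum_congr rfl (fun x2 _ => hcard (∑ x4, (W x x1 x2 x4)^2))))]
    simp only [← Finset.mul_sum]
  have hB12 : (∑ a : Fin n, ∑ b, ∑ c, ∑ d, 2 * (W d a b c * W a d b c)) = -2 * ∑ a, ∑ b, ∑ c, ∑ d, (W a b c d)^2 := by
    have hp : (∑ a : Fin n, ∑ b, ∑ c, ∑ d, 2 * (W d a b c * W a d b c))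
        = ∑ a : Fin n, ∑ b, ∑ c, ∑ d, -2 * (W a b c d)^2 := by
      refine sum4_perm _ _ ⟨fun p => (p.1, p.2.2.2, p.2.1, p.2.2.1),
        fun p => (p.1, p.2.2.1, p.2.2.2, p.2.1),
        fun ⟨a,b,c,d⟩ => rfl, fun ⟨a,b,c,d⟩ => rfl⟩ ?_
      intro a b c d
      show 2 * (W d a b c * W a d b c) = -2 * (W a d b c)^2
      rw [hWa d a b c]; ring
    rw [hp]
    simp only [← Finset.mul_sum]
  have hB34 : (∑ a : Fin n, ∑ b, ∑ c, ∑ d, 2 * (W a b d c * W a b c d)) = -2 * ∑ a, ∑ b, ∑ c, ∑ d, (W a b c d)^2 := by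
    have hp : ∀ a b c d : Fin n, 2 * (W a b d c * W a b c d) = -2 * (W a b c d)^2 := by
      intro a b c d; rw [hWb a b d c]; ring
    simp_rw [hp]
    simp only [← Finset.mul_sum]
  have hB13 : (∑ a : Fin n, ∑ b, ∑ c, ∑ d, 2 * (W d b a c * W a b d c)) = ∑ a, ∑ b, ∑ c, ∑ d, (W a b c d)^2 := by
    have hp : (∑ a : Fin n, ∑ b, ∑ c, ∑ d, 2 * (W d b a c * W a b d c))
        = ∑ a : Fin n, ∑ b, ∑ c, ∑ d, 2 * (W a b c d * W c b a d) := by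
      refine sum4_perm _ _ ⟨fun p => (p.2.2.2, p.2.1, p.1, p.2.2.1),
        fun p => (p.2.2.1, p.2.1, p.2.2.2, p.1),
        fun ⟨a,b,c,d⟩ => rfl, fun ⟨a,b,c,d⟩ => rfl⟩ (fun a b c d => rfl)
    rw [hp]
    simp only [← Finset.mul_sum]
    rw [idC W hWa hWbianchi]
    ring
  have hB14 : (∑ a : Fin n, ∑ b, ∑ c, ∑ d, 2 * (W d b c a * W a b c d)) = ∑ a, ∑ b, ∑ c, ∑ d, (W a b c d)^2 := by
    have hp : (∑ a : Fin n, ∑ b, ∑ c, ∑ d, 2 * (W d b c a * W a b c d))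
        = ∑ a : Fin n, ∑ b, ∑ c, ∑ d, 2 * (W a b c d * W a c b d) := by
      refine sum4_perm _ _ ⟨fun p => (p.2.2.1, p.1, p.2.2.2, p.2.1),
        fun p => (p.2.1, p.2.2.2, p.1, p.2.2.1),
        fun ⟨a,b,c,d⟩ => rfl, fun ⟨a,b,c,d⟩ => rfl⟩ ?_
      intro a b c d
      show 2 * (W d b c a * W a b c d) = 2 * (W c a d b * W c d a b)
      rw [hWc d b c a, hWc a b c d]
    rw [hp]
    simp only [← Finset.mul_sum]
    rw [idB W hWa hWbianchi]
    ring
  have hB23 : (∑ a : Fin n, ∑ b, ∑ c, ∑ d, 2 * (W a d b c * W a b d c)) = ∑ a, ∑ b, ∑ c, ∑ d, (W a b c d)^2 := by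
    have hp : (∑ a : Fin n, ∑ b, ∑ c, ∑ d, 2 * (W a d b c * W a b d c))
        = ∑ a : Fin n, ∑ b, ∑ c, ∑ d, 2 * (W a b c d * W a c b d) := by
      refine sum4_perm _ _ ⟨fun p => (p.1, p.2.2.2, p.2.1, p.2.2.1),
        fun p => (p.1, p.2.2.1, p.2.2.2, p.2.1),
        fun ⟨a,b,c,d⟩ => rfl, fun ⟨a,b,c,d⟩ => rfl⟩ (fun a b c d => rfl)
    rw [hp]
    simp only [← Finset.mul_sum]
    rw [idB W hWa hWbianchi]
    ring
  have hB24 : (∑ a : Fin n, ∑ b, ∑ c, ∑ d, 2 * (W a d c b * W a b c d)) = ∑ a, ∑ b, ∑ c, ∑ d, (W a b c d)^2 := by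
    have hp : (∑ a : Fin n, ∑ b, ∑ c, ∑ d, 2 * (W a d c b * W a b c d))
        = ∑ a : Fin n, ∑ b, ∑ c, ∑ d, 2 * (W a b c d * W a c b d) := by
      refine sum4_perm _ _ ⟨fun p => (p.1, p.2.2.2, p.2.1, p.2.2.1),
        fun p => (p.1, p.2.2.1, p.2.2.2, p.2.1),
        fun ⟨a,b,c,d⟩ => rfl, fun ⟨a,b,c,d⟩ => rfl⟩ ?_
      intro a b c d
      show 2 * (W a d c b * W a b c d) = 2 * (W a d b c * W a b d c)
      rw [hWb a d c b, hWb a b c d]; ring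
    rw [hp]
    simp only [← Finset.mul_sum]
    rw [idB W hWa hWbianchi]
    ring
  linarith [hA1, hA2, hA3, hA4, hB12, hB13, hB14, hB23, hB24, hB34]
include hWa hWb hWtrace in
set_option maxHeartbeats 1000000 in
lemma bigT2 :
    (∑ i, ∑ j, ∑ k, ∑ l, ∑ a, ∑ b, Gfun n W i j k l a b * Gfun n W i j k l b a)
      = 4 * ∑ a, ∑ b, ∑ c, ∑ d, (W a b c d)^2 := by
  have hW0a : ∀ i k l, W i i k l = 0 := fun i k l => by have := hWa i i k l; linarith
  have hW0b : ∀ i j k, W i j k k = 0 := fun i j k => by have := hWb i j k k; linarith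
  have htr14 : ∀ j k, ∑ x, W x j k x = 0 := by
    intro j k
    have : ∀ x, W x j k x = - W x j x k := fun x => hWb x j k x
    simp_rw [this, Finset.sum_neg_distrib, hWtrace j k, neg_zero]
  have htr23 : ∀ i l, ∑ x, W i x x l = 0 := by
    intro i l
    have : ∀ x, W i x x l = - W x i x l := fun x => hWa i x x l
    simp_rw [this, Finset.sum_neg_distrib, hWtrace i l, neg_zero]
  have htr24 : ∀ i k, ∑ x, W i x k x = 0 := by
    intro i k
    have : ∀ x, W i x k x = W x i x k := by
      intro x
      rw [hWa i x k x, hWb x i k x]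
      ring_nf
    simp_rw [this, hWtrace i k]
  simp_rw [hGcross W]
  simp only [Finset.sum_add_distrib]
  have h0 : (∑ i : Fin n, ∑ j, ∑ k, ∑ l, 4 * (W i j k l)^2)
      = 4 * ∑ a : Fin n, ∑ b, ∑ c, ∑ d, (W a b c d)^2 := by
    simp only [← Finset.mul_sum]
  have za : (∑ i : Fin n, ∑ j, ∑ k, ∑ l, W j j k l * W i i k l) = 0 :=
    Finset.sum_eq_zero fun i _ => Finset.sum_eq_zero fun j _ =>
      Finset.sum_eq_zero fun k _ => Finset.sum_eq_zero fun l _ => by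
        rw [hW0a j k l, zero_mul]
  have zb : (∑ i : Fin n, ∑ j, ∑ k, ∑ l, W i i k l * W j j k l) = 0 :=
    Finset.sum_eq_zero fun i _ => Finset.sum_eq_zero fun j _ =>
      Finset.sum_eq_zero fun k _ => Finset.sum_eq_zero fun l _ => by
        rw [hW0a i k l, zero_mul]
  have z13 : (∑ i : Fin n, ∑ j, ∑ k, ∑ l, W k j k l * W i j i l) = 0 := by
    refine Finset.sum_eq_zero fun i _ => Finset.sum_eq_zero fun j _ => ?_
    rw [Finset.sum_comm]
    refine Finset.sum_eq_zero fun l _ => ?_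
    rw [← Finset.sum_mul, hWtrace j l, zero_mul]
  have z13' : (∑ i : Fin n, ∑ j, ∑ k, ∑ l, W i j i l * W k j k l) = 0 := by
    refine Finset.sum_eq_zero fun i _ => Finset.sum_eq_zero fun j _ => ?_
    rw [Finset.sum_comm]
    refine Finset.sum_eq_zero fun l _ => ?_
    rw [← Finset.mul_sum, hWtrace j l, mul_zero]
  have z14 : (∑ i : Fin n, ∑ j, ∑ k, ∑ l, W l j k l * W i j k i) = 0 := by
    refine Finset.sum_eq_zero fun i _ => Finset.sum_eq_zero fun j _ =>
      Finset.sum_eq_zero fun k _ => ?_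
    rw [← Finset.sum_mul, htr14 j k, zero_mul]
  have z14' : (∑ i : Fin n, ∑ j, ∑ k, ∑ l, W i j k i * W l j k l) = 0 := by
    refine Finset.sum_eq_zero fun i _ => Finset.sum_eq_zero fun j _ =>
      Finset.sum_eq_zero fun k _ => ?_
    rw [← Finset.mul_sum, htr14 j k, mul_zero]
  have z23 : (∑ i : Fin n, ∑ j, ∑ k, ∑ l, W i k k l * W i j j l) = 0 := by
    refine Finset.sum_eq_zero fun i _ => Finset.sum_eq_zero fun j _ => ?_
    rw [Finset.sum_comm]
    refine Finset.sum_eq_zero fun l _ => ?_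
    rw [← Finset.sum_mul, htr23 i l, zero_mul]
  have z23' : (∑ i : Fin n, ∑ j, ∑ k, ∑ l, W i j j l * W i k k l) = 0 := by
    refine Finset.sum_eq_zero fun i _ => Finset.sum_eq_zero fun j _ => ?_
    rw [Finset.sum_comm]
    refine Finset.sum_eq_zero fun l _ => ?_
    rw [← Finset.mul_sum, htr23 i l, mul_zero]
  have z24 : (∑ i : Fin n, ∑ j, ∑ k, ∑ l, W i l k l * W i j k j) = 0 := by
    refine Finset.sum_eq_zero fun i _ => Finset.sum_eq_zero fun j _ =>
      Finset.sum_eq_zero fun k _ => ?_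
    rw [← Finset.sum_mul, htr24 i k, zero_mul]
  have z24' : (∑ i : Fin n, ∑ j, ∑ k, ∑ l, W i j k j * W i l k l) = 0 := by
    refine Finset.sum_eq_zero fun i _ => Finset.sum_eq_zero fun j _ =>
      Finset.sum_eq_zero fun k _ => ?_
    rw [← Finset.mul_sum, htr24 i k, mul_zero]
  have z34 : (∑ i : Fin n, ∑ j, ∑ k, ∑ l, W i j l l * W i j k k) = 0 :=
    Finset.sum_eq_zero fun i _ => Finset.sum_eq_zero fun j _ =>
      Finset.sum_eq_zero fun k _ => Finset.sum_eq_zero fun l _ => by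
        rw [hW0b i j l, zero_mul]
  have z34' : (∑ i : Fin n, ∑ j, ∑ k, ∑ l, W i j k k * W i j l l) = 0 :=
    Finset.sum_eq_zero fun i _ => Finset.sum_eq_zero fun j _ =>
      Finset.sum_eq_zero fun k _ => Finset.sum_eq_zero fun l _ => by
        rw [hW0b i j k, zero_mul]
  linarith [h0, za, zb, z13, z13', z14, z14', z23, z23', z24, z24', z34, z34']

lemma bigT3 :
    (∑ i, ∑ j, ∑ k, ∑ l, (∑ a, Gfun n W i j k l a a)^2)
      = 16 * ∑ a, ∑ b, ∑ c, ∑ d, (W a b c d)^2 := by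
  simp_rw [hGdiag W]
  have h : ∀ x : ℝ, (4 * x)^2 = 16 * x^2 := fun x => by ring
  simp_rw [h]
  simp only [← Finset.mul_sum]

end Aux

lemma quad {n N : ℕ} (hn : (n:ℝ) ≠ 0) (S : Fin N → Fin n → Fin n → ℝ)
    (hP : ∀ a b c d, (∑ α, S α a b * S α c d) =
      ((if a = c then (1:ℝ) else 0) * (if b = d then 1 else 0)
        + (if a = d then 1 else 0) * (if b = c then 1 else 0))/2
        - (if a = b then (1:ℝ) else 0) * (if c = d then 1 else 0) / n)
    (G : Fin n → Fin n → ℝ) :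
    ∑ α, (∑ a, ∑ b, S α a b * G a b)^2
      = (∑ a, ∑ b, G a b^2)/2 + (∑ a, ∑ b, G a b * G b a)/2 - (∑ a, G a a)^2/n := by
  have expand : ∀ α, (∑ a, ∑ b, S α a b * G a b)^2
      = ∑ a, ∑ b, ∑ c, ∑ d, (S α a b * S α c d) * (G a b * G c d) := by
    intro α
    rw [sq, Finset.sum_mul_sum]
    refine Finset.sum_congr rfl fun a _ => ?_
    have h1 : ∀ c, (∑ b, S α a b * G a b) * (∑ d, S α c d * G c d)
        = ∑ b, ∑ d, (S α a b * S α c d) * (G a b * G c d) := by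
      intro c
      rw [Finset.sum_mul_sum]
      exact Finset.sum_congr rfl fun b _ => Finset.sum_congr rfl fun d _ => by ring
    simp_rw [h1]
    rw [Finset.sum_comm]
  simp_rw [expand]
  rw [Finset.sum_comm]
  have step : ∑ a, ∑ α, ∑ b, ∑ c, ∑ d, (S α a b * S α c d) * (G a b * G c d)
      = ∑ a, ∑ b, ∑ c, ∑ d, (∑ α, S α a b * S α c d) * (G a b * G c d) := by
    refine Finset.sum_congr rfl fun a _ => ?_
    rw [Finset.sum_comm]
    refine Finset.sum_congr rfl fun b _ => ?_
    rw [Finset.sum_comm]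
    refine Finset.sum_congr rfl fun c _ => ?_
    rw [Finset.sum_comm]
    refine Finset.sum_congr rfl fun d _ => ?_
    rw [Finset.sum_mul]
  rw [step]
  simp_rw [hP]
  have split : ∀ a b c d : Fin n,
      (((if a = c then (1:ℝ) else 0) * (if b = d then 1 else 0)
        + (if a = d then 1 else 0) * (if b = c then 1 else 0))/2
        - (if a = b then (1:ℝ) else 0) * (if c = d then 1 else 0) / n) * (G a b * G c d)
      = ((if a = c then (1:ℝ) else 0) * ((if b = d then 1 else 0) * (G a b * G c d)))/2
        + ((if a = d then (1:ℝ) else 0) * ((if b = c then 1 else 0) * (G a b * G c d)))/2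
        - ((if a = b then (1:ℝ) else 0) * ((if c = d then 1 else 0) * (G a b * G c d)))/n := by
    intro a b c d; ring
  simp_rw [split]
  simp only [Finset.sum_add_distrib, Finset.sum_sub_distrib, ← Finset.sum_div]
  congr 1
  · congr 1
    · -- first: ∑abcd (if a=c)(if b=d) G G = ∑ab Gab²
      congr 1
      refine Finset.sum_congr rfl fun a _ => ?_
      refine Finset.sum_congr rfl fun b _ => ?_
      simp [ite_mul, mul_ite, Finset.sum_ite_eq', sq]
    · congr 1
      refine Finset.sum_congr rfl fun a _ => ?_
      refine Finset.sum_congr rfl fun b _ => ?_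
      simp [ite_mul, mul_ite, Finset.sum_ite_eq', mul_comm]
  · congr 1
    rw [sq, Finset.sum_mul_sum]
    refine Finset.sum_congr rfl fun a _ => ?_
    simp [ite_mul, mul_ite, Finset.sum_ite_eq', Finset.mul_sum]

lemma Pcomp {n N : ℕ} (hn : (n:ℝ) ≠ 0)
    (S : Fin N → Fin n → Fin n → ℝ)
    (hSsymm : ∀ α i j, S α i j = S α j i)
    (hStrace : ∀ α, ∑ i, S α i i = 0)
    (hScomplete : ∀ T : Fin n → Fin n → ℝ, (∀ i j, T i j = T j i) → (∑ i, T i i = 0) →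
      ∀ i j, T i j = ∑ α, (∑ k, ∑ l, T k l * S α k l) * S α i j) :
    ∀ a b c d : Fin n, (∑ α, S α a b * S α c d) =
      ((if a = c then (1:ℝ) else 0) * (if b = d then 1 else 0)
        + (if a = d then 1 else 0) * (if b = c then 1 else 0))/2
        - (if a = b then (1:ℝ) else 0) * (if c = d then 1 else 0) / n := by
  intro a b c d
  set T : Fin n → Fin n → ℝ := fun i j =>
    ((if i = c then (1:ℝ) else 0) * (if j = d then 1 else 0)
      + (if i = d then 1 else 0) * (if j = c then 1 else 0))/2
      - (if i = j then (1:ℝ) else 0) * (if c = d then 1 else 0) / n with hT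
  have hTsymm : ∀ i j, T i j = T j i := by
    intro i j
    simp only [hT]
    have : (if i = j then (1:ℝ) else 0) = (if j = i then 1 else 0) := by
      simp [eq_comm]
    rw [this]; ring
  have hTtrace : ∑ i, T i i = 0 := by
    simp only [hT, if_true]
    rw [Finset.sum_sub_distrib]
    have hc : (Finset.univ : Finset (Fin n)).card = n := by simp
    rcases eq_or_ne c d with h|h
    · subst h
      simp only [if_true, one_mul, mul_one, ite_mul, zero_mul, mul_ite, mul_zero]
      simp [Finset.sum_ite_eq', Finset.sum_div, Finset.sum_const, hc, Finset.sum_add_distrib]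
      field_simp
      norm_num
    · simp [h, Ne.symm h, ite_mul, mul_ite, ← Finset.sum_div,
        Finset.sum_add_distrib, Finset.sum_ite_eq']
  have hmain := hScomplete T hTsymm hTtrace a b
  have hinner : ∀ α, (∑ k, ∑ l, T k l * S α k l) = S α c d := by
    intro α
    simp only [hT]
    have hpt : ∀ k l : Fin n,
        (((if k = c then (1:ℝ) else 0) * (if l = d then 1 else 0)
          + (if k = d then 1 else 0) * (if l = c then 1 else 0))/2
          - (if k = l then (1:ℝ) else 0) * (if c = d then 1 else 0) / n) * S α k l
        = ((if k = c then (1:ℝ) else 0) * ((if l = d then 1 else 0) * S α k l))/2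
          + ((if k = d then (1:ℝ) else 0) * ((if l = c then 1 else 0) * S α k l))/2
          - ((if k = l then (1:ℝ) else 0) * S α k l) * ((if c = d then 1 else 0) / n) := by
      intro k l; ring
    simp_rw [hpt]
    simp only [Finset.sum_add_distrib, Finset.sum_sub_distrib, ← Finset.sum_div,
      ← Finset.sum_mul]
    simp only [ite_mul, mul_ite, one_mul, zero_mul, mul_one, mul_zero,
      Finset.sum_ite_eq', Finset.sum_ite_eq, Finset.mem_univ, if_true]
    rw [hStrace α, hSsymm α d c]
    ring
  have h2 : (∑ α, S α a b * S α c d) = ∑ α, (∑ k, ∑ l, T k l * S α k l) * S α a b :=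
    Finset.sum_congr rfl fun α _ => by rw [hinner]; ring
  rw [h2, ← hmain]


set_option maxHeartbeats 1000000 in
theorem sum_basis_act_weyl_sq
    (n N : ℕ) (hn : 3 ≤ n) (hN : 2 * N = (n - 1) * (n + 2))
    (W : Fin n → Fin n → Fin n → Fin n → ℝ)
    (hWa : ∀ i j k l, W i j k l = - W j i k l)
    (hWb : ∀ i j k l, W i j k l = - W i j l k)
    (hWc : ∀ i j k l, W i j k l = W k l i j)
    (hWbianchi : ∀ i j k l, W i j k l + W j k i l + W k i j l = 0)
    (hWtrace : ∀ k l, ∑ i, W i k i l = 0)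
    (S : Fin N → Fin n → Fin n → ℝ)
    (hSsymm : ∀ α i j, S α i j = S α j i)
    (hStrace : ∀ α, ∑ i, S α i i = 0)
    (hSortho : ∀ α β, (∑ i, ∑ j, S α i j * S β i j) = if α = β then 1 else 0)
    (hScomplete : ∀ T : Fin n → Fin n → ℝ, (∀ i j, T i j = T j i) → (∑ i, T i i = 0) →
      ∀ i j, T i j = ∑ α, (∑ k, ∑ l, T k l * S α k l) * S α i j) :
    (∑ α, ∑ i, ∑ j, ∑ k, ∑ l, (tensorAct n (S α) W i j k l) ^ 2) =
      2 * ((n : ℝ) ^ 2 + n - 8) * (∑ i, ∑ j, ∑ k, ∑ l, (W i j k l) ^ 2) / n := by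
  have hn0 : (n:ℝ) ≠ 0 := by
    have : 0 < n := by omega
    exact_mod_cast this.ne'
  have hP := Pcomp hn0 S hSsymm hStrace hScomplete
  have hact : ∀ (Sm : Fin n → Fin n → ℝ) (i j k l : Fin n),
      tensorAct n Sm W i j k l = ∑ a, ∑ b, Sm a b * Gfun n W i j k l a b := by
    intro Sm i j k l
    have p1 : ∀ (c : Fin n) (X : Fin n → ℝ),
        (∑ a, ∑ b, Sm a b * ((if a = c then (1:ℝ) else 0) * X b)) = ∑ b, Sm c b * X b := by
      intro c X
      have h : ∀ a : Fin n, (∑ b, Sm a b * ((if a = c then (1:ℝ) else 0) * X b))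
          = (if a = c then (1:ℝ) else 0) * ∑ b, Sm a b * X b := by
        intro a
        rw [Finset.mul_sum]
        exact Finset.sum_congr rfl fun b _ => by ring
      simp_rw [h]
      simp [ite_mul, Finset.sum_ite_eq']
    unfold tensorAct Gfun
    simp only [mul_add, Finset.sum_add_distrib]
    rw [p1 i (fun b => W b j k l), p1 j (fun b => W i b k l),
      p1 k (fun b => W i j b l), p1 l (fun b => W i j k b)]
  have swap5 : (∑ α, ∑ i, ∑ j, ∑ k, ∑ l, (tensorAct n (S α) W i j k l)^2)
      = ∑ i, ∑ j, ∑ k, ∑ l, ∑ α, (tensorAct n (S α) W i j k l)^2 := by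
    rw [Finset.sum_comm]
    refine Finset.sum_congr rfl fun i _ => ?_
    rw [Finset.sum_comm]
    refine Finset.sum_congr rfl fun j _ => ?_
    rw [Finset.sum_comm]
    refine Finset.sum_congr rfl fun k _ => ?_
    rw [Finset.sum_comm]
  rw [swap5]
  have hpt : ∀ i j k l : Fin n, (∑ α, (tensorAct n (S α) W i j k l)^2)
      = (∑ a, ∑ b, (Gfun n W i j k l a b)^2)/2
        + (∑ a, ∑ b, Gfun n W i j k l a b * Gfun n W i j k l b a)/2
        - (∑ a, Gfun n W i j k l a a)^2/n := by
    intro i j k l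
    have h : ∀ α, (tensorAct n (S α) W i j k l)^2
        = (∑ a, ∑ b, S α a b * Gfun n W i j k l a b)^2 := fun α => by rw [hact]
    simp_rw [h]
    exact quad hn0 S hP (Gfun n W i j k l)
  simp_rw [hpt]
  simp only [Finset.sum_add_distrib, Finset.sum_sub_distrib, ← Finset.sum_div]
  rw [bigT1 W hWa hWb hWc hWbianchi, bigT2 W hWa hWb hWtrace, bigT3 W]
  field_simp
  ring
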